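/- In the birth-death setting, for bounded f : ℕ → ℝ set g_f(i) = Σ_{j ∈ ℕ} f(j) g_j(i) (the series converges absolutely). Then: (a) for every i ∈ ℕ, sup{ |g_f(i+1)| : f : ℕ → [0,1] } = g_{1_{[0,i]}}(i+1), where 1_{[0,i]} is the indicator of {0,1,…,i}; (b) if moreover α(x) − α(x+1) + β(x+1) − β(x) ≥ 0 for all x ∈ ℕ, then for every i ≥ 1, sup{ |g_f(i+1) − g_f(i)| : f : ℕ → [0,1] } = g_{1_{{i}}}(i+1) − g_{1_{{i}}}(i), where 1_{{i}} is the indicator of the singleton {i}. -/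

import Mathlib

open scoped BigOperators

/-- `w(x) = ∏_{y=1}^x α(y−1)/β(y)` (empty product equal to `1`). -/
noncomputable def bdW (a b : ℕ → ℝ) (x : ℕ) : ℝ := ∏ y ∈ Finset.range x, a y / b (y + 1)

/-- The invariant probability measure `π` of the birth-death process:
`π(x) = π(0) ∏_{y=1}^x α(y−1)/β(y)` with `π(0) = (Σ_{x≥0} w(x))⁻¹`. -/
noncomputable def bdPi (a b : ℕ → ℝ) (x : ℕ) : ℝ := bdW a b x / ∑' y : ℕ, bdW a b y

/-- `e_i^+ = (Σ_{k=0}^i π(k)) / (α(i) π(i))`. -/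
noncomputable def ePlus (a b : ℕ → ℝ) (i : ℕ) : ℝ :=
  (∑ k ∈ Finset.range (i + 1), bdPi a b k) / (a i * bdPi a b i)

/-- `e_i^- = (Σ_{k=i}^∞ π(k)) / (β(i) π(i))`. -/
noncomputable def eMinus (a b : ℕ → ℝ) (i : ℕ) : ℝ :=
  (∑' k : ℕ, bdPi a b (i + k)) / (b i * bdPi a b i)

/-- `g_j(0) = 0` and `g_j(i) = π(j)(−e_{i−1}^+ 1_{i≤j} + e_i^- 1_{i≥j+1})` for `i ≥ 1`. -/
noncomputable def gBD (a b : ℕ → ℝ) (j i : ℕ) : ℝ :=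
  if i = 0 then 0
  else bdPi a b j *
    ((if i ≤ j then -ePlus a b (i - 1) else 0) + (if j + 1 ≤ i then eMinus a b i else 0))

section Aux
variable {a b : ℕ → ℝ}

lemma bdW_pos (ha : ∀ x : ℕ, 0 < a x) (hb : ∀ x : ℕ, 1 ≤ x → 0 < b x) (x : ℕ) :
    0 < bdW a b x :=
  Finset.prod_pos fun y _ => div_pos (ha y) (hb (y + 1) (Nat.le_add_left 1 y))

lemma bdS_pos (ha : ∀ x : ℕ, 0 < a x) (hb : ∀ x : ℕ, 1 ≤ x → 0 < b x)
    (hw : Summable (bdW a b)) : 0 < ∑' y : ℕ, bdW a b y :=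
  Summable.tsum_pos hw (fun x => (bdW_pos ha hb x).le) 0 (bdW_pos ha hb 0)

lemma bdPi_pos (ha : ∀ x : ℕ, 0 < a x) (hb : ∀ x : ℕ, 1 ≤ x → 0 < b x)
    (hw : Summable (bdW a b)) (x : ℕ) : 0 < bdPi a b x :=
  div_pos (bdW_pos ha hb x) (bdS_pos ha hb hw)

lemma bdPi_summable (hw : Summable (bdW a b)) : Summable (bdPi a b) :=
  hw.div_const _

lemma bd_balance (ha : ∀ x : ℕ, 0 < a x) (hb : ∀ x : ℕ, 1 ≤ x → 0 < b x)
    (hw : Summable (bdW a b)) (x : ℕ) :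
    a x * bdPi a b x = b (x + 1) * bdPi a b (x + 1) := by
  have hbx : b (x + 1) ≠ 0 := (hb (x + 1) (Nat.le_add_left 1 x)).ne'
  have hS : (∑' y : ℕ, bdW a b y) ≠ 0 := (bdS_pos ha hb hw).ne'
  have h1 : bdW a b (x + 1) = bdW a b x * (a x / b (x + 1)) := Finset.prod_range_succ _ _
  simp only [bdPi]
  rw [h1]
  field_simp

lemma bdPi_tail_summable (hw : Summable (bdW a b)) (m : ℕ) :
    Summable (fun k : ℕ => bdPi a b (m + k)) := by
  have := (summable_nat_add_iff m).mpr (bdPi_summable hw)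
  simpa [add_comm] using this

end Aux

section Aux2
variable {a b : ℕ → ℝ}

lemma gBD_succ (a b : ℕ → ℝ) (i j : ℕ) :
    gBD a b j (i + 1) =
      if j ≤ i then bdPi a b j * eMinus a b (i + 1) else bdPi a b j * (-ePlus a b i) := by
  simp only [gBD, Nat.succ_ne_zero, if_false, Nat.add_sub_cancel]
  rcases le_or_gt j i with h | h
  · rw [if_neg (by omega), if_pos (by omega), if_pos h]
    ring
  · rw [if_pos (by omega), if_neg (by omega), if_neg (by omega)]
    ring

lemma ePlus_nonneg (ha : ∀ x : ℕ, 0 < a x) (hb : ∀ x : ℕ, 1 ≤ x → 0 < b x)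
    (hw : Summable (bdW a b)) (i : ℕ) : 0 ≤ ePlus a b i :=
  div_nonneg (Finset.sum_nonneg fun k _ => (bdPi_pos ha hb hw k).le)
    (mul_pos (ha i) (bdPi_pos ha hb hw i)).le

lemma eMinus_nonneg (ha : ∀ x : ℕ, 0 < a x) (hb : ∀ x : ℕ, 1 ≤ x → 0 < b x)
    (hw : Summable (bdW a b)) (i : ℕ) (hi : 1 ≤ i) : 0 ≤ eMinus a b i :=
  div_nonneg (tsum_nonneg fun k => (bdPi_pos ha hb hw (i + k)).le)
    (mul_pos (hb i hi) (bdPi_pos ha hb hw i)).le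

lemma summable_gBD (ha : ∀ x : ℕ, 0 < a x) (hb : ∀ x : ℕ, 1 ≤ x → 0 < b x)
    (hw : Summable (bdW a b)) (m : ℕ) : Summable (fun j : ℕ => gBD a b j m) := by
  rcases m with _ | i
  · simpa [gBD] using summable_zero
  · rw [← summable_abs_iff]
    refine Summable.of_nonneg_of_le (fun j => abs_nonneg _) (fun j => ?_)
      ((bdPi_summable hw).mul_left (|eMinus a b (i + 1)| + |ePlus a b i|))
    have hπ := (bdPi_pos ha hb hw j).le
    rw [gBD_succ]
    split_ifs
    · rw [abs_mul, abs_of_nonneg hπ]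
      nlinarith [abs_nonneg (ePlus a b i)]
    · rw [abs_mul, abs_of_nonneg hπ, abs_neg]
      nlinarith [abs_nonneg (eMinus a b (i + 1))]

lemma tsum_gBD (ha : ∀ x : ℕ, 0 < a x) (hb : ∀ x : ℕ, 1 ≤ x → 0 < b x)
    (hw : Summable (bdW a b)) (i : ℕ) : ∑' j : ℕ, gBD a b j (i + 1) = 0 := by
  have hsum := summable_gBD ha hb hw (i + 1)
  rw [← Summable.sum_add_tsum_nat_add (i + 1) hsum]
  have h1 : ∑ j ∈ Finset.range (i + 1), gBD a b j (i + 1)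
      = (∑ j ∈ Finset.range (i + 1), bdPi a b j) * eMinus a b (i + 1) := by
    rw [Finset.sum_mul]
    apply Finset.sum_congr rfl
    intro j hj
    rw [gBD_succ, if_pos (by simpa [Nat.lt_succ_iff] using Finset.mem_range.mp hj)]
  have h2 : ∑' k : ℕ, gBD a b (k + (i + 1)) (i + 1)
      = (∑' k : ℕ, bdPi a b (i + 1 + k)) * (-ePlus a b i) := by
    rw [← tsum_mul_right]
    apply tsum_congr
    intro k
    rw [gBD_succ, if_neg (by omega)]
    congr 2
    omega
  rw [h1, h2]
  have hbal := bd_balance ha hb hw i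
  have hd : b (i + 1) * bdPi a b (i + 1) ≠ 0 :=
    (mul_pos (hb (i + 1) (Nat.le_add_left 1 i)) (bdPi_pos ha hb hw (i + 1))).ne'
  simp only [eMinus, ePlus, ← hbal]
  rw [← hbal] at hd
  field_simp
  ring

end Aux2

section Mono
variable {a b : ℕ → ℝ}

lemma bd_telescope (ha : ∀ x : ℕ, 0 < a x) (hb0 : b 0 = 0) (hb : ∀ x : ℕ, 1 ≤ x → 0 < b x)
    (hw : Summable (bdW a b)) (i : ℕ) :
    ∑ k ∈ Finset.range (i + 1), bdPi a b k * (a k - b k) = a i * bdPi a b i := by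
  induction i with
  | zero => simp [hb0]; ring
  | succ n ih =>
    rw [Finset.sum_range_succ, ih]
    linear_combination bd_balance ha hb hw n

lemma ePlus_mono (ha : ∀ x : ℕ, 0 < a x) (hb0 : b 0 = 0) (hb : ∀ x : ℕ, 1 ≤ x → 0 < b x)
    (hw : Summable (bdW a b)) (hmon : ∀ x : ℕ, 0 ≤ a x - a (x + 1) + b (x + 1) - b x)
    (i : ℕ) : ePlus a b i ≤ ePlus a b (i + 1) := by
  have hanti : ∀ x y : ℕ, x ≤ y → a y - b y ≤ a x - b x := by
    intro x y hxy
    have h : Antitone (fun x => a x - b x) := antitone_nat_of_succ_le fun n => by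
      show a (n + 1) - b (n + 1) ≤ a n - b n
      linarith [hmon n]
    have := h hxy
    simp only at this
    linarith
  have key : (∑ k ∈ Finset.range (i + 1), bdPi a b k) * (a (i + 1) - b (i + 1))
      ≤ b (i + 1) * bdPi a b (i + 1) := by
    rw [← bd_balance ha hb hw i, ← bd_telescope ha hb0 hb hw i, Finset.sum_mul]
    apply Finset.sum_le_sum
    intro k hk
    exact mul_le_mul_of_nonneg_left
      (hanti k (i + 1) (by have := Finset.mem_range.mp hk; omega)) (bdPi_pos ha hb hw k).le
  unfold ePlus
  rw [div_le_div_iff₀ (mul_pos (ha i) (bdPi_pos ha hb hw i))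
    (mul_pos (ha (i + 1)) (bdPi_pos ha hb hw (i + 1)))]
  rw [bd_balance ha hb hw i]
  nth_rewrite 2 [Finset.sum_range_succ]
  nlinarith [bdPi_pos ha hb hw (i + 1),
    mul_le_mul_of_nonneg_right key (bdPi_pos ha hb hw (i + 1)).le]

lemma eMinus_anti (ha : ∀ x : ℕ, 0 < a x) (hb0 : b 0 = 0) (hb : ∀ x : ℕ, 1 ≤ x → 0 < b x)
    (hw : Summable (bdW a b)) (hmon : ∀ x : ℕ, 0 ≤ a x - a (x + 1) + b (x + 1) - b x)
    (i : ℕ) (hi : 1 ≤ i) : eMinus a b (i + 1) ≤ eMinus a b i := by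
  have hmono : ∀ x y : ℕ, x ≤ y → b x - a x ≤ b y - a y := by
    intro x y hxy
    have h : Antitone (fun x => a x - b x) := antitone_nat_of_succ_le fun n => by
      show a (n + 1) - b (n + 1) ≤ a n - b n
      linarith [hmon n]
    have := h hxy
    simp only at this
    linarith
  have tele : ∀ N : ℕ, ∑ k ∈ Finset.range N, bdPi a b (i + 1 + k) * (b (i + 1 + k) - a (i + 1 + k))
      = a i * bdPi a b i - a (i + N) * bdPi a b (i + N) := by
    intro N
    induction N with
    | zero => simp
    | succ n ih =>
      rw [Finset.sum_range_succ, ih]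
      have h1 : i + 1 + n = (i + n) + 1 := by omega
      rw [h1, show i + (n + 1) = (i + n) + 1 from by omega]
      linear_combination -bd_balance ha hb hw (i + n)
  have bound : ∀ N : ℕ, (∑ k ∈ Finset.range N, bdPi a b (i + 1 + k)) * (b i - a i)
      ≤ a i * bdPi a b i := by
    intro N
    calc (∑ k ∈ Finset.range N, bdPi a b (i + 1 + k)) * (b i - a i)
        ≤ ∑ k ∈ Finset.range N, bdPi a b (i + 1 + k) * (b (i + 1 + k) - a (i + 1 + k)) := by
          rw [Finset.sum_mul]
          exact Finset.sum_le_sum fun k _ => mul_le_mul_of_nonneg_left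
            (hmono i (i + 1 + k) (by omega)) (bdPi_pos ha hb hw _).le
      _ = a i * bdPi a b i - a (i + N) * bdPi a b (i + N) := tele N
      _ ≤ a i * bdPi a b i := by
          nlinarith [mul_pos (ha (i + N)) (bdPi_pos ha hb hw (i + N))]
  have limit : (∑' k : ℕ, bdPi a b (i + 1 + k)) * (b i - a i) ≤ a i * bdPi a b i := by
    have hs := (bdPi_tail_summable hw (i + 1)).hasSum.tendsto_sum_nat
    have ht : Filter.Tendsto (fun N => (∑ k ∈ Finset.range N, bdPi a b (i + 1 + k)) * (b i - a i))
        Filter.atTop (nhds ((∑' k : ℕ, bdPi a b (i + 1 + k)) * (b i - a i))) := hs.mul_const _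
    exact le_of_tendsto ht (Filter.Eventually.of_forall bound)
  have hsplit : (∑' k : ℕ, bdPi a b (i + k)) = bdPi a b i + ∑' k : ℕ, bdPi a b (i + 1 + k) := by
    rw [Summable.tsum_eq_zero_add (bdPi_tail_summable hw i)]
    congr 1
    exact tsum_congr fun k => by rw [show i + (k + 1) = i + 1 + k from by omega]
  unfold eMinus
  rw [div_le_div_iff₀ (mul_pos (hb (i + 1) (by omega)) (bdPi_pos ha hb hw (i + 1)))
    (mul_pos (hb i hi) (bdPi_pos ha hb hw i))]
  rw [← bd_balance ha hb hw i, hsplit]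
  nlinarith [bdPi_pos ha hb hw i, mul_le_mul_of_nonneg_right limit (bdPi_pos ha hb hw i).le,
    (tsum_nonneg (fun k => (bdPi_pos ha hb hw (i + 1 + k)).le) : 0 ≤ ∑' k : ℕ, bdPi a b (i + 1 + k))]

end Mono

/-- Argmax of the pointwise Stein factors for bounded functions, where
`g_f(i) = Σ_j f(j) g_j(i)`: the series converges absolutely for bounded `f`;
(a) `sup{|g_f(i+1)| : 0 ≤ f ≤ 1} = g_{1_{[0,i]}}(i+1)`;
(b) under the monotonicity condition,
`sup{|g_f(i+1) − g_f(i)| : 0 ≤ f ≤ 1} = g_{1_{{i}}}(i+1) − g_{1_{{i}}}(i)` for `i ≥ 1`. -/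
theorem argmax_pointwise_stein_factor_bounded (a b : ℕ → ℝ)
    (ha : ∀ x : ℕ, 0 < a x) (hb0 : b 0 = 0) (hb : ∀ x : ℕ, 1 ≤ x → 0 < b x)
    (hw : Summable (bdW a b)) :
    (∀ (f : ℕ → ℝ), (∃ C : ℝ, ∀ j : ℕ, |f j| ≤ C) →
      ∀ i : ℕ, Summable fun j : ℕ => |f j * gBD a b j i|) ∧
    (∀ i : ℕ,
      IsGreatest
        {M : ℝ | ∃ f : ℕ → ℝ, (∀ j : ℕ, 0 ≤ f j ∧ f j ≤ 1) ∧
          M = |∑' j : ℕ, f j * gBD a b j (i + 1)|}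
        (∑' j : ℕ, (if j ≤ i then (1 : ℝ) else 0) * gBD a b j (i + 1))) ∧
    ((∀ x : ℕ, 0 ≤ a x - a (x + 1) + b (x + 1) - b x) →
      ∀ i : ℕ, 1 ≤ i →
        IsGreatest
          {M : ℝ | ∃ f : ℕ → ℝ, (∀ j : ℕ, 0 ≤ f j ∧ f j ≤ 1) ∧
            M = |(∑' j : ℕ, f j * gBD a b j (i + 1)) - ∑' j : ℕ, f j * gBD a b j i|}
          (gBD a b i (i + 1) - gBD a b i i)) := by
  have hpart1 : ∀ (f : ℕ → ℝ), (∃ C : ℝ, ∀ j : ℕ, |f j| ≤ C) →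
      ∀ i : ℕ, Summable fun j : ℕ => |f j * gBD a b j i| := by
    rintro f ⟨C, hC⟩ i
    refine Summable.of_nonneg_of_le (fun j => abs_nonneg _) (fun j => ?_)
      (((summable_gBD ha hb hw i).abs).mul_left C)
    rw [abs_mul]
    exact mul_le_mul_of_nonneg_right (hC j) (abs_nonneg _)
  have hsum01 : ∀ (f : ℕ → ℝ), (∀ j : ℕ, 0 ≤ f j ∧ f j ≤ 1) →
      ∀ i : ℕ, Summable fun j : ℕ => f j * gBD a b j i := by
    intro f hf i
    refine summable_abs_iff.mp (hpart1 f ⟨1, fun j => ?_⟩ i)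
    rw [abs_of_nonneg (hf j).1]
    exact (hf j).2
  refine ⟨hpart1, ?_, ?_⟩
  · -- part (a)
    intro i
    have hvpos : ∀ j, j ≤ i → 0 ≤ gBD a b j (i + 1) := by
      intro j hj
      rw [gBD_succ, if_pos hj]
      exact mul_nonneg (bdPi_pos ha hb hw j).le (eMinus_nonneg ha hb hw (i + 1) (by omega))
    have hvneg : ∀ j, ¬j ≤ i → gBD a b j (i + 1) ≤ 0 := by
      intro j hj
      rw [gBD_succ, if_neg hj]
      exact mul_nonpos_of_nonneg_of_nonpos (bdPi_pos ha hb hw j).le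
        (neg_nonpos_of_nonneg (ePlus_nonneg ha hb hw i))
    have hind01 : ∀ j : ℕ, 0 ≤ (if j ≤ i then (1 : ℝ) else 0) ∧
        (if j ≤ i then (1 : ℝ) else 0) ≤ 1 := by
      intro j; split_ifs <;> norm_num
    have hind : Summable fun j : ℕ => (if j ≤ i then (1 : ℝ) else 0) * gBD a b j (i + 1) :=
      hsum01 _ hind01 (i + 1)
    have hT : 0 ≤ ∑' j : ℕ, (if j ≤ i then (1 : ℝ) else 0) * gBD a b j (i + 1) := by
      refine tsum_nonneg fun j => ?_
      by_cases h : j ≤ i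
      · simpa [h] using hvpos j h
      · simp [h]
    constructor
    · exact ⟨fun j => if j ≤ i then 1 else 0, hind01, (abs_of_nonneg hT).symm⟩
    · rintro M ⟨f, hf01, rfl⟩
      have hfv : Summable fun j : ℕ => f j * gBD a b j (i + 1) := hsum01 f hf01 (i + 1)
      have h1 : ∀ j : ℕ, f j * gBD a b j (i + 1)
          ≤ (if j ≤ i then (1 : ℝ) else 0) * gBD a b j (i + 1) := by
        intro j
        by_cases h : j ≤ i
        · simp only [if_pos h, one_mul]
          nlinarith [hvpos j h, (hf01 j).1, (hf01 j).2]
        · simp only [if_neg h, zero_mul]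
          exact mul_nonpos_of_nonneg_of_nonpos (hf01 j).1 (hvneg j h)
      have h2 : ∀ j : ℕ, gBD a b j (i + 1) - (if j ≤ i then (1 : ℝ) else 0) * gBD a b j (i + 1)
          ≤ f j * gBD a b j (i + 1) := by
        intro j
        by_cases h : j ≤ i
        · simp only [if_pos h, one_mul, sub_self]
          exact mul_nonneg (hf01 j).1 (hvpos j h)
        · simp only [if_neg h, zero_mul, sub_zero]
          nlinarith [hvneg j h, (hf01 j).1, (hf01 j).2]
      have hub := Summable.tsum_le_tsum h1 hfv hind
      have hlb := Summable.tsum_le_tsum h2 ((summable_gBD ha hb hw (i + 1)).sub hind) hfv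
      rw [Summable.tsum_sub (summable_gBD ha hb hw (i + 1)) hind, tsum_gBD ha hb hw i, zero_sub] at hlb
      exact abs_le.mpr ⟨hlb, hub⟩
  · -- part (b)
    intro hmon i hi
    obtain ⟨n, rfl⟩ : ∃ n, i = n + 1 := ⟨i - 1, by omega⟩
    have hπ := bdPi_pos ha hb hw
    have hv_i : 0 ≤ gBD a b (n + 1) (n + 1 + 1) - gBD a b (n + 1) (n + 1) := by
      rw [gBD_succ a b (n + 1), gBD_succ a b n, if_pos (le_refl (n + 1)), if_neg (by omega)]
      have h1 := eMinus_nonneg ha hb hw (n + 1 + 1) (by omega)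
      have h2 := ePlus_nonneg ha hb hw n
      nlinarith [hπ (n + 1)]
    have hv_neg : ∀ j, j ≠ n + 1 → gBD a b j (n + 1 + 1) - gBD a b j (n + 1) ≤ 0 := by
      intro j hj
      rw [gBD_succ a b (n + 1), gBD_succ a b n]
      rcases le_or_gt j n with h | h
      · rw [if_pos (by omega), if_pos h]
        have := eMinus_anti ha hb0 hb hw hmon (n + 1) (by omega)
        nlinarith [hπ j]
      · rw [if_neg (by omega), if_neg (by omega)]
        have := ePlus_mono ha hb0 hb hw hmon n
        nlinarith [hπ j]
    have hsv : Summable fun j => gBD a b j (n + 1 + 1) - gBD a b j (n + 1) :=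
      (summable_gBD ha hb hw (n + 1 + 1)).sub (summable_gBD ha hb hw (n + 1))
    have hsu : Summable fun j : ℕ =>
        if j = n + 1 then gBD a b (n + 1) (n + 1 + 1) - gBD a b (n + 1) (n + 1) else 0 :=
      summable_of_ne_finset_zero (s := {n + 1}) fun j hj => if_neg (by simpa using hj)
    have htu : (∑' j : ℕ, if j = n + 1 then
          gBD a b (n + 1) (n + 1 + 1) - gBD a b (n + 1) (n + 1) else 0)
        = gBD a b (n + 1) (n + 1 + 1) - gBD a b (n + 1) (n + 1) := by
      rw [tsum_eq_single (n + 1) fun j hj => if_neg hj, if_pos rfl]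
    have htv : (∑' j : ℕ, (gBD a b j (n + 1 + 1) - gBD a b j (n + 1))) = 0 := by
      rw [Summable.tsum_sub (summable_gBD ha hb hw (n + 1 + 1)) (summable_gBD ha hb hw (n + 1)),
        tsum_gBD ha hb hw (n + 1), tsum_gBD ha hb hw n, sub_zero]
    constructor
    · refine ⟨fun j => if j = n + 1 then 1 else 0, fun j => by dsimp only; split_ifs <;> norm_num, ?_⟩
      have e1 : (∑' j : ℕ, (if j = n + 1 then (1 : ℝ) else 0) * gBD a b j (n + 1 + 1))
          = gBD a b (n + 1) (n + 1 + 1) := by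
        rw [tsum_eq_single (n + 1) fun j hj => by simp [hj]]
        simp
      have e0 : (∑' j : ℕ, (if j = n + 1 then (1 : ℝ) else 0) * gBD a b j (n + 1))
          = gBD a b (n + 1) (n + 1) := by
        rw [tsum_eq_single (n + 1) fun j hj => by simp [hj]]
        simp
      rw [e1, e0, abs_of_nonneg hv_i]
    · rintro M ⟨f, hf01, rfl⟩
      have hf1 : Summable fun j : ℕ => f j * gBD a b j (n + 1 + 1) := hsum01 f hf01 (n + 1 + 1)
      have hf0 : Summable fun j : ℕ => f j * gBD a b j (n + 1) := hsum01 f hf01 (n + 1)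
      rw [← Summable.tsum_sub hf1 hf0]
      have h1 : ∀ j : ℕ, f j * gBD a b j (n + 1 + 1) - f j * gBD a b j (n + 1)
          ≤ if j = n + 1 then gBD a b (n + 1) (n + 1 + 1) - gBD a b (n + 1) (n + 1) else 0 := by
        intro j
        by_cases h : j = n + 1
        · subst h
          rw [if_pos rfl]
          nlinarith [hv_i, (hf01 (n + 1)).1, (hf01 (n + 1)).2]
        · rw [if_neg h]
          nlinarith [hv_neg j h, (hf01 j).1, (hf01 j).2]
      have h2 : ∀ j : ℕ, (gBD a b j (n + 1 + 1) - gBD a b j (n + 1))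
            - (if j = n + 1 then gBD a b (n + 1) (n + 1 + 1) - gBD a b (n + 1) (n + 1) else 0)
          ≤ f j * gBD a b j (n + 1 + 1) - f j * gBD a b j (n + 1) := by
        intro j
        by_cases h : j = n + 1
        · subst h
          rw [if_pos rfl, sub_self]
          nlinarith [hv_i, (hf01 (n + 1)).1, (hf01 (n + 1)).2]
        · rw [if_neg h, sub_zero]
          nlinarith [hv_neg j h, (hf01 j).1, (hf01 j).2]
      have hub := Summable.tsum_le_tsum h1 (hf1.sub hf0) hsu
      have hlb := Summable.tsum_le_tsum h2 (hsv.sub hsu) (hf1.sub hf0)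
      rw [Summable.tsum_sub hsv hsu, htv, htu, zero_sub] at hlb
      rw [htu] at hub
      exact abs_le.mpr ⟨hlb, hub⟩
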